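/- arXiv:1804.05241 — 5 statements merged into one kernel-verified Lean document; each statement's English description precedes it below -/
import Mathlib

section
/- If T_g > 0, T_l > 0, J ≥ 0, and p_i = (√T_l · p_g + √T_g · p_l)/(√T_g + √T_l), then the pressure-relaxation entropy source S_p = ((p_g − p_i)/T_g − (p_l − p_i)/T_l) · J·(p_g − p_l) is non-negative, and S_p = J·(p_g − p_l)²/√(T_g·T_l). -/
theorem pressure_relaxation_entropy_source_nonneg
    (Tg Tl pg pl J : ℝ) (hTg : 0 < Tg) (hTl : 0 < Tl) (hJ : 0 ≤ J)
    (pi : ℝ)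
    (hpi : pi = (Real.sqrt Tl * pg + Real.sqrt Tg * pl) / (Real.sqrt Tg + Real.sqrt Tl)) :
    0 ≤ ((pg - pi) / Tg - (pl - pi) / Tl) * (J * (pg - pl)) ∧
      ((pg - pi) / Tg - (pl - pi) / Tl) * (J * (pg - pl))
        = J * (pg - pl) ^ 2 / Real.sqrt (Tg * Tl) := by
  have ha : 0 < Real.sqrt Tg := Real.sqrt_pos.mpr hTg
  have hb : 0 < Real.sqrt Tl := Real.sqrt_pos.mpr hTl
  have hga : Real.sqrt Tg * Real.sqrt Tg = Tg := Real.mul_self_sqrt hTg.le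
  have hgb : Real.sqrt Tl * Real.sqrt Tl = Tl := Real.mul_self_sqrt hTl.le
  have hab : Real.sqrt (Tg * Tl) = Real.sqrt Tg * Real.sqrt Tl :=
    Real.sqrt_mul hTg.le Tl
  have key : ((pg - pi) / Tg - (pl - pi) / Tl) * (J * (pg - pl))
      = J * (pg - pl) ^ 2 / Real.sqrt (Tg * Tl) := by
    subst hpi
    rw [hab, ← hga, ← hgb]
    generalize Real.sqrt Tg = a at ha
    generalize Real.sqrt Tl = b at hb
    have hsum : a + b ≠ 0 := by positivity
    field_simp
    simp only [Real.sqrt_sq ha.le, Real.sqrt_sq hb.le, Real.sqrt_mul_self ha.le, Real.sqrt_mul_self hb.le]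
    ring
  refine ⟨?_, key⟩
  rw [key]
  positivity
end

section
/- If T_g > 0, T_l > 0, M ≥ 0, and v_i = (√T_l·v_g + √T_g·v_l)/(√T_g + √T_l), then the friction entropy source S_v = ((v_i − v_g)/T_g − (v_i − v_l)/T_l)·M·(v_l − v_g) is non-negative, and equals M·(v_l − v_g)²/√(T_g·T_l). -/
theorem friction_entropy_source_nonneg
    (Tg Tl vg vl M : ℝ) (hTg : 0 < Tg) (hTl : 0 < Tl) (hM : 0 ≤ M)
    (vi : ℝ)
    (hvi : vi = (Real.sqrt Tl * vg + Real.sqrt Tg * vl) / (Real.sqrt Tg + Real.sqrt Tl)) :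
    0 ≤ ((vi - vg) / Tg - (vi - vl) / Tl) * (M * (vl - vg)) ∧
      ((vi - vg) / Tg - (vi - vl) / Tl) * (M * (vl - vg))
        = M * (vl - vg) ^ 2 / Real.sqrt (Tg * Tl) := by
  set s := Real.sqrt Tg with hsdef
  set t := Real.sqrt Tl with htdef
  have hs : 0 < s := Real.sqrt_pos.mpr hTg
  have ht : 0 < t := Real.sqrt_pos.mpr hTl
  have hs2 : s ^ 2 = Tg := Real.sq_sqrt hTg.le
  have ht2 : t ^ 2 = Tl := Real.sq_sqrt hTl.le
  have hst : Real.sqrt (Tg * Tl) = s * t := Real.sqrt_mul hTg.le Tl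
  have heq : ((vi - vg) / Tg - (vi - vl) / Tl) * (M * (vl - vg))
      = M * (vl - vg) ^ 2 / Real.sqrt (Tg * Tl) := by
    rw [hst, hvi, ← hs2, ← ht2]
    have hsum : s + t ≠ 0 := by positivity
    field_simp
    ring
  refine ⟨?_, heq⟩
  rw [heq, hst]
  positivity
end

section
/- If T_g > 0, T_l > 0, K ≥ 0, μ_i = β·μ_g + (1−β)·μ_l with β ∈ [0,1], and v_i = (√T_l·v_g + √T_g·v_l)/(√T_g + √T_l), then the mass-transfer entropy source S_μ = [ (μ_i − μ_g + ½(v_i − v_g)²)/T_g − (μ_i − μ_l + ½(v_i − v_l)²)/T_l ]·K·(μ_l − μ_g) is non-negative. -/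
theorem mass_transfer_entropy_source_nonneg
    (Tg Tl mug mul vg vl K beta : ℝ)
    (hTg : 0 < Tg) (hTl : 0 < Tl) (hK : 0 ≤ K)
    (hbeta0 : 0 ≤ beta) (hbeta1 : beta ≤ 1)
    (mui vi : ℝ)
    (hmui : mui = beta * mug + (1 - beta) * mul)
    (hvi : vi = (Real.sqrt Tl * vg + Real.sqrt Tg * vl) / (Real.sqrt Tg + Real.sqrt Tl)) :
    0 ≤ ((mui - mug + (1/2) * (vi - vg) ^ 2) / Tg
          - (mui - mul + (1/2) * (vi - vl) ^ 2) / Tl) * (K * (mul - mug)) := by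
  set a := Real.sqrt Tg with ha
  set b := Real.sqrt Tl with hb
  have ha2 : a ^ 2 = Tg := Real.sq_sqrt hTg.le
  have hb2 : b ^ 2 = Tl := Real.sq_sqrt hTl.le
  have hapos : 0 < a := Real.sqrt_pos.mpr hTg
  have hbpos : 0 < b := Real.sqrt_pos.mpr hTl
  have habne : a + b ≠ 0 := by positivity
  have key : ((mui - mug + (1/2) * (vi - vg) ^ 2) / Tg
          - (mui - mul + (1/2) * (vi - vl) ^ 2) / Tl) * (K * (mul - mug))
      = ((1 - beta) / Tg + beta / Tl) * (K * (mul - mug) ^ 2) := by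
    subst hmui hvi
    rw [← ha2, ← hb2]
    field_simp
    ring
  rw [key]
  have h1 : 0 ≤ (1 - beta) / Tg + beta / Tl := by
    have := sub_nonneg.mpr hbeta1
    positivity
  positivity
end

section
/- If J, K, M, H ≥ 0, T_g, T_l > 0, β ∈ [0,1], and both the interface pressure p_i and interface velocity v_i are the square-root-of-temperature weighted averages, and μ_i = β·μ_g + (1−β)·μ_l, then the total entropy source S = S_p + S_μ + S_v + S_T is non-negative, where S_p = ((p_g−p_i)/T_g − (p_l−p_i)/T_l)·J·(p_g−p_l), S_μ = [(μ_i−μ_g+½(v_i−v_g)²)/T_g − (μ_i−μ_l+½(v_i−v_l)²)/T_l]·K·(μ_l−μ_g), S_v = ((v_i−v_g)/T_g − (v_i−v_l)/T_l)·M·(v_l−v_g), S_T = (1/T_g − 1/T_l)·H·(T_l−T_g). -/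
theorem second_law_total_entropy_source_nonneg
    (J K M H Tg Tl pg pl vg vl mug mul beta : ℝ)
    (hJ : 0 ≤ J) (hK : 0 ≤ K) (hM : 0 ≤ M) (hH : 0 ≤ H)
    (hTg : 0 < Tg) (hTl : 0 < Tl)
    (hbeta0 : 0 ≤ beta) (hbeta1 : beta ≤ 1)
    (pi vi mui : ℝ)
    (hpi : pi = (Real.sqrt Tl * pg + Real.sqrt Tg * pl) / (Real.sqrt Tg + Real.sqrt Tl))
    (hvi : vi = (Real.sqrt Tl * vg + Real.sqrt Tg * vl) / (Real.sqrt Tg + Real.sqrt Tl))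
    (hmui : mui = beta * mug + (1 - beta) * mul) :
    0 ≤ ((pg - pi) / Tg - (pl - pi) / Tl) * (J * (pg - pl))
        + ((mui - mug + (1/2) * (vi - vg) ^ 2) / Tg
            - (mui - mul + (1/2) * (vi - vl) ^ 2) / Tl) * (K * (mul - mug))
        + ((vi - vg) / Tg - (vi - vl) / Tl) * (M * (vl - vg))
        + (1 / Tg - 1 / Tl) * (H * (Tl - Tg)) := by
  have ha : 0 < Real.sqrt Tg := Real.sqrt_pos.2 hTg
  have hb : 0 < Real.sqrt Tl := Real.sqrt_pos.2 hTl
  set a := Real.sqrt Tg with hadef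
  set b := Real.sqrt Tl with hbdef
  have ha2 : a ^ 2 = Tg := Real.sq_sqrt hTg.le
  have hb2 : b ^ 2 = Tl := Real.sq_sqrt hTl.le
  have hab : 0 < a + b := by linarith
  have h1b : 0 ≤ 1 - beta := by linarith
  subst hpi hvi hmui
  rw [← ha2, ← hb2]
  have key : ((pg - (b * pg + a * pl) / (a + b)) / a ^ 2
          - (pl - (b * pg + a * pl) / (a + b)) / b ^ 2) * (J * (pg - pl))
        + ((beta * mug + (1 - beta) * mul - mug
              + (1/2) * ((b * vg + a * vl) / (a + b) - vg) ^ 2) / a ^ 2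
            - (beta * mug + (1 - beta) * mul - mul
              + (1/2) * ((b * vg + a * vl) / (a + b) - vl) ^ 2) / b ^ 2)
            * (K * (mul - mug))
        + (((b * vg + a * vl) / (a + b) - vg) / a ^ 2
            - ((b * vg + a * vl) / (a + b) - vl) / b ^ 2) * (M * (vl - vg))
        + (1 / a ^ 2 - 1 / b ^ 2) * (H * (b ^ 2 - a ^ 2))
      = J * (pg - pl) ^ 2 / (a * b)
        + K * (mul - mug) ^ 2 * ((1 - beta) / a ^ 2 + beta / b ^ 2)
        + M * (vl - vg) ^ 2 / (a * b)
        + H * (b ^ 2 - a ^ 2) ^ 2 / (a ^ 2 * b ^ 2) := by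
    field_simp
    ring
  rw [key]
  have t1 : 0 ≤ J * (pg - pl) ^ 2 / (a * b) := by positivity
  have t2 : 0 ≤ K * (mul - mug) ^ 2 * ((1 - beta) / a ^ 2 + beta / b ^ 2) := by
    apply mul_nonneg (by positivity)
    exact add_nonneg (div_nonneg h1b (sq_nonneg a)) (div_nonneg hbeta0 (sq_nonneg b))
  have t3 : 0 ≤ M * (vl - vg) ^ 2 / (a * b) := by positivity
  have t4 : 0 ≤ H * (b ^ 2 - a ^ 2) ^ 2 / (a ^ 2 * b ^ 2) := by positivity
  linarith
end

section
/- Suppose the mass balance ∂_t(αρ) + ∂_x(αρv) = K holds and v satisfies ∂_t v + v∂_x v = (αρ)⁻¹[(p_i − p)∂_x α − α ∂_x p + (v_i − v)K + M] with αρ > 0. Then the kinetic energy E_kin = ½αρv² satisfies ∂_t E_kin + ∂_x(E_kin v) + αv ∂_x p + v(p − p_i)∂_x α = (v_i v − ½v²)K + vM. -/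
/-- Partial derivative with respect to time (second argument). -/
noncomputable def pt (f : ℝ → ℝ → ℝ) (x t : ℝ) : ℝ := deriv (fun τ => f x τ) t

/-- Partial derivative with respect to space (first argument). -/
noncomputable def px (f : ℝ → ℝ → ℝ) (x t : ℝ) : ℝ := deriv (fun y => f y t) x

lemma slice_t {f : ℝ → ℝ → ℝ} (hf : ContDiff ℝ 1 (Function.uncurry f)) (x t : ℝ) :
    HasDerivAt (fun τ => f x τ) (pt f x t) t := by
  have h0 : DifferentiableAt ℝ (Function.uncurry f) (x, t) :=
    (hf.differentiable one_ne_zero).differentiableAt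
  have h1 : DifferentiableAt ℝ (fun τ : ℝ => (x, τ)) t :=
    (differentiableAt_const x).prodMk differentiableAt_id
  have h2 : DifferentiableAt ℝ (fun τ => f x τ) t := h0.comp t h1
  simpa [pt] using h2.hasDerivAt

lemma slice_x {f : ℝ → ℝ → ℝ} (hf : ContDiff ℝ 1 (Function.uncurry f)) (x t : ℝ) :
    HasDerivAt (fun y => f y t) (px f x t) x := by
  have h0 : DifferentiableAt ℝ (Function.uncurry f) (x, t) :=
    (hf.differentiable one_ne_zero).differentiableAt
  have h1 : DifferentiableAt ℝ (fun y : ℝ => (y, t)) x :=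
    differentiableAt_id.prodMk (differentiableAt_const t)
  have h2 : DifferentiableAt ℝ (fun y => f y t) x := by have := h0.comp x h1; exact this
  simpa [px] using h2.hasDerivAt

theorem kinetic_energy_evolution
    (α ρ v p pI vI K M : ℝ → ℝ → ℝ)
    (hα : ContDiff ℝ 1 (Function.uncurry α)) (hρ : ContDiff ℝ 1 (Function.uncurry ρ))
    (hv : ContDiff ℝ 1 (Function.uncurry v)) (hp : ContDiff ℝ 1 (Function.uncurry p))
    (hpos : ∀ x t, 0 < α x t * ρ x t)
    (hmass : ∀ x t, pt (fun x t => α x t * ρ x t) x t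
        + px (fun x t => α x t * ρ x t * v x t) x t = K x t)
    (hvel : ∀ x t, pt v x t + v x t * px v x t
        = (α x t * ρ x t)⁻¹ *
            ((pI x t - p x t) * px α x t - α x t * px p x t
              + (vI x t - v x t) * K x t + M x t)) :
    ∀ x t, pt (fun x t => (1/2) * α x t * ρ x t * v x t ^ 2) x t
        + px (fun x t => (1/2) * α x t * ρ x t * v x t ^ 2 * v x t) x t
        + α x t * v x t * px p x t
        + v x t * (p x t - pI x t) * px α x t
      = (vI x t * v x t - (1/2) * v x t ^ 2) * K x t + v x t * M x t := by
  intro x t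
  have hαt := slice_t hα x t
  have hρt := slice_t hρ x t
  have hvt := slice_t hv x t
  have hαx := slice_x hα x t
  have hρx := slice_x hρ x t
  have hvx := slice_x hv x t
  set A := α x t with hA
  set R := ρ x t with hR
  set V := v x t with hV
  set At := pt α x t
  set Rt := pt ρ x t
  set Vt := pt v x t
  set Ax := px α x t
  set Rx := px ρ x t
  set Vx := px v x t
  -- compute the composite partial derivatives
  have hm_t : pt (fun x t => α x t * ρ x t) x t = At * R + A * Rt :=
    (hαt.mul hρt).deriv
  have hm_x : px (fun x t => α x t * ρ x t * v x t) x t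
      = (Ax * R + A * Rx) * V + A * R * Vx :=
    ((hαx.mul hρx).mul hvx).deriv
  have hE_t : pt (fun x t => (1/2) * α x t * ρ x t * v x t ^ 2) x t
      = ((0 * A + (1/2) * At) * R + (1/2) * A * Rt) * V ^ 2
        + (1/2) * A * R * (2 * V ^ 1 * Vt) := by
    exact ((((hasDerivAt_const t ((1:ℝ)/2)).mul hαt).mul hρt).mul (hvt.pow 2)).deriv
  have hE_x : px (fun x t => (1/2) * α x t * ρ x t * v x t ^ 2 * v x t) x t
      = (((0 * A + (1/2) * Ax) * R + (1/2) * A * Rx) * V ^ 2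
          + (1/2) * A * R * (2 * V ^ 1 * Vx)) * V
        + (1/2) * A * R * V ^ 2 * Vx := by
    exact (((((hasDerivAt_const x ((1:ℝ)/2)).mul hαx).mul hρx).mul (hvx.pow 2)).mul hvx).deriv
  have hmass' := hmass x t
  rw [hm_t, hm_x] at hmass'
  have hvel' := hvel x t
  have hne : A * R ≠ 0 := ne_of_gt (hpos x t)
  rw [hE_t, hE_x]
  have hvel'' : A * R * (Vt + V * Vx)
      = (pI x t - p x t) * Ax - A * px p x t + (vI x t - V) * K x t + M x t := by
    rw [hvel']; exact mul_inv_cancel_left₀ hne _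
  linear_combination (1/2) * V^2 * hmass' + V * hvel''
end
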